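/- Let X_T be the binary tree space, f ∈ X_T*, and ε > 0. Then there exist finitely many branches β_1,...,β_k of T and n ∈ ℕ such that |f(e_s)| < ε for every s ∈ T with |s| > n and s ∉ β_1 ∪ ⋯ ∪ β_k. -/
import Mathlib


open Metric Filter Topology

/-- Nodes of the infinite binary tree: finite sequences over `{0,1}`. -/
abbrev TreeNode := List Bool

/-- A finite set of nodes is a chain if its elements are pairwise comparable for the
initial-segment (prefix) order. -/
def IsFinChain (A : Finset TreeNode) : Prop := ∀ s ∈ A, ∀ t ∈ A, s <+: t ∨ t <+: s

/-- A set of nodes is a chain if its elements are pairwise comparable. -/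
def IsSetChain (A : Set TreeNode) : Prop := ∀ s ∈ A, ∀ t ∈ A, s <+: t ∨ t <+: s

/-- A branch is a maximal chain of the binary tree. -/
def IsBranch (β : Set TreeNode) : Prop :=
  IsSetChain β ∧ ∀ γ : Set TreeNode, IsSetChain γ → β ⊆ γ → γ = β

/-- A set of nodes is an antichain if its elements are pairwise incomparable. -/
def IsTreeAntichain (A : Set TreeNode) : Prop :=
  ∀ s ∈ A, ∀ t ∈ A, s ≠ t → ¬ s <+: t ∧ ¬ t <+: s

/-- The binary tree norm of a finitely supported function on the tree: the supremum over
chains `A` of `∑_{t ∈ A} |c t|`. -/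
noncomputable def treeNorm (c : TreeNode →₀ ℝ) : ℝ :=
  sSup {r | ∃ A : Finset TreeNode, IsFinChain A ∧ r = ∑ t ∈ A, |c t|}

/-- The node of length `n` lying on the (infinite) branch determined by `b : ℕ → Bool`. -/
def branchNode (b : ℕ → Bool) (n : ℕ) : TreeNode := List.ofFn fun i : Fin n => b i

/- Auxiliary lemmas -/

lemma my_sign_mul_self (x : ℝ) : Real.sign x * x = |x| := by
  rcases lt_trichotomy x 0 with h|h|h
  · rw [Real.sign_of_neg h, abs_of_neg h]; ring
  · simp [h]
  · rw [Real.sign_of_pos h, abs_of_pos h]; ring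

lemma my_abs_sign_le_one (x : ℝ) : |Real.sign x| ≤ 1 := by
  rcases lt_trichotomy x 0 with h|h|h
  · simp [Real.sign_of_neg h]
  · simp [h, Real.sign_zero]
  · simp [Real.sign_of_pos h]

lemma branchNode_length (b : ℕ → Bool) (n : ℕ) : (branchNode b n).length = n := by
  simp [branchNode]

lemma branchNode_succ (b : ℕ → Bool) (n : ℕ) :
    branchNode b (n + 1) = branchNode b n ++ [b n] := by
  rw [branchNode, List.ofFn_succ', List.concat_eq_append]
  simp [branchNode]

lemma branchNode_prefix (b : ℕ → Bool) {k m : ℕ} (h : k ≤ m) :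
    branchNode b k <+: branchNode b m := by
  induction m with
  | zero => simp_all
  | succ m ih =>
    rcases Nat.lt_or_ge k (m+1) with h'|h'
    · exact (ih (by omega)).trans ⟨[b m], (branchNode_succ b m).symm⟩
    · have : k = m + 1 := by omega
      subst this; exact List.prefix_rfl

lemma prefix_branchNode {b : ℕ → Bool} {a : TreeNode} {m : ℕ}
    (h : a <+: branchNode b m) : a = branchNode b a.length := by
  have hlen : a.length ≤ m := by
    have := h.length_le
    simpa [branchNode_length] using this
  have h2 : branchNode b a.length <+: branchNode b m := branchNode_prefix b hlen
  have h3 : a <+: branchNode b a.length :=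
    List.prefix_of_prefix_length_le h h2 (by simp [branchNode_length])
  exact h3.eq_of_length (by simp [branchNode_length])

lemma exists_extend {t s : TreeNode} (h : t <+: s) (hl : t.length < s.length) :
    ∃ c, t ++ [c] <+: s := by
  obtain ⟨r, rfl⟩ := h
  cases r with
  | nil => simp at hl
  | cons c r => exact ⟨c, ⟨r, by simp⟩⟩

/-- `t` has arbitrarily long extensions in `S`. -/
def GoodNode (S : Set TreeNode) (t : TreeNode) : Prop :=
  ∀ n, ∃ s ∈ S, t <+: s ∧ n < s.length

open Classical in
noncomputable def nodeSeq (S : Set TreeNode) : ℕ → TreeNode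
  | 0 => []
  | n+1 => nodeSeq S n ++ [if GoodNode S (nodeSeq S n ++ [true]) then true else false]

open Classical in
noncomputable def bSeq (S : Set TreeNode) (n : ℕ) : Bool :=
  if GoodNode S (nodeSeq S n ++ [true]) then true else false

lemma nodeSeq_succ (S : Set TreeNode) (n : ℕ) :
    nodeSeq S (n+1) = nodeSeq S n ++ [bSeq S n] := rfl

lemma nodeSeq_length (S : Set TreeNode) (n : ℕ) : (nodeSeq S n).length = n := by
  induction n with
  | zero => rfl
  | succ n ih => rw [nodeSeq_succ]; simp [ih]

lemma goodNode_step {S : Set TreeNode} {t : TreeNode} (h : GoodNode S t)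
    (hnt : ¬ GoodNode S (t ++ [true])) : GoodNode S (t ++ [false]) := by
  unfold GoodNode at hnt
  push_neg at hnt
  obtain ⟨n₁, hn₁⟩ := hnt
  intro n
  obtain ⟨s, hsS, hpre, hlen⟩ := h (max (max n n₁) t.length)
  have hlt : t.length < s.length := by omega
  obtain ⟨c, hc⟩ := exists_extend hpre hlt
  cases c with
  | true =>
    exfalso
    have := hn₁ s hsS hc
    omega
  | false => exact ⟨s, hsS, hc, by omega⟩

lemma nodeSeq_good {S : Set TreeNode} (h : GoodNode S []) (n : ℕ) :
    GoodNode S (nodeSeq S n) := by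
  induction n with
  | zero => exact h
  | succ n ih =>
    rw [nodeSeq_succ]
    unfold bSeq
    split
    · assumption
    · exact goodNode_step ih (by assumption)

lemma nodeSeq_eq_branchNode (S : Set TreeNode) (n : ℕ) :
    nodeSeq S n = branchNode (bSeq S) n := by
  induction n with
  | zero => rfl
  | succ n ih => rw [nodeSeq_succ, branchNode_succ, ih]

/-- Key incomparability: a node off branch `b`, of length `≤ m`, is incomparable with any
extension of `branchNode b m`. -/
lemma incomp {b : ℕ → Bool} {a s₀ : TreeNode} {m : ℕ}
    (ha : a ≠ branchNode b a.length) (hm : a.length ≤ m)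
    (hs : branchNode b m <+: s₀) : ¬ a <+: s₀ ∧ ¬ s₀ <+: a := by
  constructor
  · intro hpre
    have h1 : a <+: branchNode b m :=
      List.prefix_of_prefix_length_le hpre hs (by simpa [branchNode_length] using hm)
    exact ha (prefix_branchNode h1)
  · intro hpre
    have h1 : m ≤ s₀.length := by
      have := hs.length_le; simpa [branchNode_length] using this
    have h2 : s₀.length ≤ a.length := hpre.length_le
    have h3 : a.length = m := by omega
    have h4 : s₀ = a := hpre.eq_of_length (by omega)
    have h5 : s₀ = branchNode b m := (hs.eq_of_length (by simp [branchNode_length]; omega)).symm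
    exact ha (by rw [h3, ← h4]; exact h5)

/-- Combinatorial covering lemma: a set of nodes all of whose finite antichains have at most
`K` elements is, from some level on, covered by finitely many branches. -/
lemma cover (K : ℕ) : ∀ S : Set TreeNode,
    (∀ A : Finset TreeNode, ↑A ⊆ S → IsTreeAntichain ↑A → A.card ≤ K) →
    ∃ Bs : Set (ℕ → Bool), Bs.Finite ∧ ∃ n : ℕ,
      ∀ s ∈ S, n < s.length → ∃ b ∈ Bs, s = branchNode b s.length := by
  induction K with
  | zero =>
    intro S hS
    refine ⟨∅, Set.finite_empty, 0, ?_⟩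
    intro s hs _
    have h1 : ({s} : Finset TreeNode).card ≤ 0 := by
      apply hS
      · simpa using hs
      · intro x hx y hy hxy
        simp only [Finset.coe_singleton, Set.mem_singleton_iff] at hx hy
        exact absurd (hx.trans hy.symm) hxy
    simp at h1
  | succ K ih =>
    intro S hS
    by_cases hbd : ∃ n, ∀ s ∈ S, s.length ≤ n
    · obtain ⟨n, hn⟩ := hbd
      exact ⟨∅, Set.finite_empty, n, fun s hs hlen => absurd (hn s hs) (by omega)⟩
    · push_neg at hbd
      have hgood : GoodNode S [] := by
        intro n
        obtain ⟨s, hs, h⟩ := hbd n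
        exact ⟨s, hs, List.nil_prefix, h⟩
      set b := bSeq S with hb
      set S' : Set TreeNode := {s ∈ S | s ≠ branchNode b s.length} with hS'def
      have hS' : ∀ A : Finset TreeNode, ↑A ⊆ S' → IsTreeAntichain ↑A → A.card ≤ K := by
        intro A hAsub hAanti
        set m := A.sup List.length with hm
        obtain ⟨s₀, hs₀S, hpre₀, -⟩ := nodeSeq_good hgood m 0
        rw [nodeSeq_eq_branchNode] at hpre₀
        have hinc : ∀ a ∈ A, ¬ a <+: s₀ ∧ ¬ s₀ <+: a := by
          intro a haA
          have haS' : a ∈ S' := hAsub haA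
          exact incomp haS'.2 (Finset.le_sup haA) hpre₀
        have hs₀A : s₀ ∉ A := fun h => (hinc s₀ h).2 List.prefix_rfl
        have hcard : (insert s₀ A).card ≤ K + 1 := by
          apply hS
          · intro x hx
            simp only [Finset.coe_insert, Set.mem_insert_iff] at hx
            rcases hx with rfl|hx
            · exact hs₀S
            · exact (hAsub hx).1
          · intro x hx y hy hxy
            simp only [Finset.coe_insert, Set.mem_insert_iff, Finset.mem_coe] at hx hy
            rcases hx with rfl|hx
            · rcases hy with rfl|hy
              · exact absurd rfl hxy
              · exact ⟨(hinc y hy).2, (hinc y hy).1⟩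
            · rcases hy with rfl|hy
              · exact ⟨(hinc x hx).1, (hinc x hx).2⟩
              · exact hAanti x hx y hy hxy
        rw [Finset.card_insert_of_notMem hs₀A] at hcard
        omega
      obtain ⟨Bs, hfin, n, hcov⟩ := ih S' hS'
      refine ⟨insert b Bs, hfin.insert b, n, ?_⟩
      intro s hs hlen
      by_cases h : s = branchNode b s.length
      · exact ⟨b, Set.mem_insert _ _, h⟩
      · obtain ⟨b', hb', h'⟩ := hcov s ⟨hs, h⟩ hlen
        exact ⟨b', Set.mem_insert_of_mem _ hb', h'⟩

/-- Sums of `|f(e_a)|` over antichains are bounded by `‖f‖`. -/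
lemma antichain_sum {X : Type*} [NormedAddCommGroup X] [NormedSpace ℝ X]
    (e : TreeNode → X)
    (hnorm : ∀ c : TreeNode →₀ ℝ, ‖c.sum fun t a => a • e t‖ = treeNorm c)
    (f : X →L[ℝ] ℝ) (A : Finset TreeNode) (hA : IsTreeAntichain ↑A) :
    ∑ a ∈ A, |f (e a)| ≤ ‖f‖ := by
  classical
  set c : TreeNode →₀ ℝ := Finsupp.onFinset A
    (fun t => if t ∈ A then Real.sign (f (e t)) else 0)
    (fun t h => by by_contra hn; simp [hn] at h) with hc
  have hcapp : ∀ t, c t = if t ∈ A then Real.sign (f (e t)) else 0 := fun t => rfl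
  have hsum : c.sum (fun t a => a • e t) = ∑ t ∈ A, Real.sign (f (e t)) • e t := by
    rw [Finsupp.sum_of_support_subset c Finsupp.support_onFinset_subset _
      (fun i _ => by simp)]
    exact Finset.sum_congr rfl fun t ht => by rw [hcapp, if_pos ht]
  have hfval : f (c.sum fun t a => a • e t) = ∑ a ∈ A, |f (e a)| := by
    rw [hsum, map_sum]
    exact Finset.sum_congr rfl fun t _ => by
      rw [f.map_smul, smul_eq_mul, my_sign_mul_self]
  have htn : treeNorm c ≤ 1 := by
    apply Real.sSup_le _ zero_le_one
    rintro r ⟨B, hB, rfl⟩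
    have hint : (B ∩ A).card ≤ 1 := by
      rw [Finset.card_le_one]
      intro x hx y hy
      by_contra hxy
      obtain ⟨hxB, hxA⟩ := Finset.mem_inter.1 hx
      obtain ⟨hyB, hyA⟩ := Finset.mem_inter.1 hy
      have h1 := hB x hxB y hyB
      have h2 := hA x hxA y hyA hxy
      tauto
    have e1 : ∑ t ∈ B, |c t| = ∑ t ∈ B ∩ A, |c t| := by
      refine (Finset.sum_subset Finset.inter_subset_left fun t htB htnA => ?_).symm
      have htA : t ∉ A := fun h => htnA (Finset.mem_inter.2 ⟨htB, h⟩)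
      rw [hcapp, if_neg htA, abs_zero]
    calc ∑ t ∈ B, |c t| = ∑ t ∈ B ∩ A, |c t| := e1
      _ ≤ ∑ _t ∈ B ∩ A, (1 : ℝ) := Finset.sum_le_sum fun t _ => by
          rw [hcapp]; split
          · exact my_abs_sign_le_one _
          · simp
      _ = (B ∩ A).card := by simp
      _ ≤ 1 := by exact_mod_cast hint
  calc ∑ a ∈ A, |f (e a)| = f (c.sum fun t a => a • e t) := hfval.symm
    _ ≤ |f (c.sum fun t a => a • e t)| := le_abs_self _
    _ ≤ ‖f‖ * ‖c.sum fun t a => a • e t‖ := by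
        rw [← Real.norm_eq_abs]; exact f.le_opNorm _
    _ = ‖f‖ * treeNorm c := by rw [hnorm]
    _ ≤ ‖f‖ * 1 := mul_le_mul_of_nonneg_left htn (norm_nonneg f)
    _ = ‖f‖ := mul_one _

/-- **Functionals are small off finitely many branches.** For every functional `f` on the
binary tree space and every `ε > 0` there are finitely many branches `β_1, …, β_k`
(parametrized by `b : ℕ → Bool`) and `n ∈ ℕ` such that `|f(e_s)| < ε` for every node `s`
of length `> n` lying on none of the branches `β_i`. -/
theorem binary_tree_functional_small_off_branches {X : Type*} [NormedAddCommGroup X]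
    [NormedSpace ℝ X] [CompleteSpace X] (e : TreeNode → X)
    (hnorm : ∀ c : TreeNode →₀ ℝ, ‖c.sum fun t a => a • e t‖ = treeNorm c)
    (hdense : DenseRange fun c : TreeNode →₀ ℝ => c.sum fun t a => a • e t)
    (f : X →L[ℝ] ℝ) (ε : ℝ) (hε : 0 < ε) :
    ∃ Bs : Set (ℕ → Bool), Bs.Finite ∧ ∃ n : ℕ,
      ∀ s : TreeNode, n < s.length → (∀ b ∈ Bs, s ≠ branchNode b s.length) →
        |f (e s)| < ε := by
  classical
  set S : Set TreeNode := {s | ε ≤ |f (e s)|} with hSdef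
  have hanti : ∀ A : Finset TreeNode, ↑A ⊆ S → IsTreeAntichain ↑A →
      A.card ≤ ⌊‖f‖ / ε⌋₊ := by
    intro A hA hAanti
    have hsum : ∑ a ∈ A, |f (e a)| ≤ ‖f‖ := antichain_sum e hnorm f A hAanti
    have h1 : (A.card : ℝ) * ε ≤ ∑ a ∈ A, |f (e a)| := by
      calc (A.card : ℝ) * ε = ∑ _a ∈ A, ε := by rw [Finset.sum_const, nsmul_eq_mul]
        _ ≤ ∑ a ∈ A, |f (e a)| := Finset.sum_le_sum fun a ha => hA ha
    apply Nat.le_floor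
    rw [le_div_iff₀ hε]
    exact h1.trans hsum
  obtain ⟨Bs, hfin, n, hcov⟩ := cover ⌊‖f‖ / ε⌋₊ S hanti
  refine ⟨Bs, hfin, n, ?_⟩
  intro s hlen hoff
  by_contra h
  push_neg at h
  obtain ⟨b, hb, hs⟩ := hcov s h hlen
  exact hoff b hb hs
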